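/- arXiv:1307.2319 — 6 statements merged into one kernel-verified Lean document; each statement's English description precedes it below -/
import Mathlib

section
/- For all real numbers x and y with 2 ≤ y ≤ x/2, one has x^x / (x-y)^(x-y) < e^(2y) · x^y. -/
theorem stmt_0 (x y : ℝ) (h2 : 2 ≤ y) (hxy : y ≤ x / 2) :
    x ^ x / (x - y) ^ (x - y) < Real.exp (2 * y) * x ^ y := by
  have hy : 0 < y := by linarith
  have hx : 0 < x := by linarith
  have hz : 0 < x - y := by linarith
  have hsplit : x ^ x / (x - y) ^ (x - y) = (x / (x - y)) ^ (x - y) * x ^ y := by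
    rw [Real.div_rpow hx.le hz.le]
    rw [div_mul_eq_mul_div, ← Real.rpow_add hx]
    ring_nf
  rw [hsplit]
  have hxpos : (0:ℝ) < x ^ y := Real.rpow_pos_of_pos hx y
  refine mul_lt_mul_of_pos_right ?_ hxpos
  have h1 : x / (x - y) = 1 + y / (x - y) := by field_simp; ring
  have h2' : x / (x - y) ≤ Real.exp (y / (x - y)) := by
    rw [h1, add_comm]
    exact Real.add_one_le_exp _
  calc (x / (x - y)) ^ (x - y) ≤ Real.exp (y / (x - y)) ^ (x - y) := by
        apply Real.rpow_le_rpow (by positivity) h2' hz.le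
    _ = Real.exp y := by
        rw [← Real.exp_one_rpow (y / (x - y)), ← Real.rpow_mul (le_of_lt (Real.exp_pos 1))]
        rw [Real.exp_one_rpow]
        field_simp
    _ < Real.exp (2 * y) := by
        apply Real.exp_lt_exp.mpr; linarith
end

section
/- Fix an integer a ≥ 2. There exists a constant C > 0 such that for all real x ≥ 2, the sum of n / ord_n(a), taken over positive integers n ≤ x with gcd(n,a) = 1 and ord_n(a) ≤ 3 · (log x)/(log a), is at most C · x^(3/2) · log x. -/
private lemma pow8_le (k : ℕ) : (k + 1) ^ 8 ≤ 2 ^ 41 * 2 ^ k := by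
  have step : ∀ j : ℕ, (j + 13) ^ 8 ≤ 2 ^ 41 * 2 ^ (j + 12) := by
    intro j
    induction j with
    | zero => norm_num
    | succ j ih =>
      have h1 : 12 * (j + 14) ≤ 13 * (j + 13) := by omega
      have h3 : 12 ^ 8 * (j + 14) ^ 8 ≤ 13 ^ 8 * (j + 13) ^ 8 := by
        calc 12 ^ 8 * (j + 14) ^ 8 = (12 * (j + 14)) ^ 8 := (mul_pow ..).symm
          _ ≤ (13 * (j + 13)) ^ 8 := Nat.pow_le_pow_left h1 8
          _ = 13 ^ 8 * (j + 13) ^ 8 := mul_pow ..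
      have h4 : 13 ^ 8 * (j + 13) ^ 8 ≤ 12 ^ 8 * (2 * (j + 13) ^ 8) := by
        have h13 : (13:ℕ) ^ 8 ≤ 2 * 12 ^ 8 := by norm_num
        calc 13 ^ 8 * (j + 13) ^ 8 ≤ 2 * 12 ^ 8 * (j + 13) ^ 8 :=
              Nat.mul_le_mul_right _ h13
          _ = 12 ^ 8 * (2 * (j + 13) ^ 8) := by ring
      have h5 : (j + 14) ^ 8 ≤ 2 * (j + 13) ^ 8 :=
        Nat.le_of_mul_le_mul_left (h3.trans h4) (by norm_num)
      calc (j + 1 + 13) ^ 8 = (j + 14) ^ 8 := by ring_nf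
        _ ≤ 2 * (j + 13) ^ 8 := h5
        _ ≤ 2 * (2 ^ 41 * 2 ^ (j + 12)) := Nat.mul_le_mul_left _ ih
        _ = 2 ^ 41 * 2 ^ (j + 1 + 12) := by ring
  rcases lt_or_ge k 12 with h | h
  · interval_cases k <;> norm_num
  · obtain ⟨j, rfl⟩ := Nat.exists_eq_add_of_le h
    calc (12 + j + 1) ^ 8 = (j + 13) ^ 8 := by ring_nf
      _ ≤ 2 ^ 41 * 2 ^ (j + 12) := step j
      _ = 2 ^ 41 * 2 ^ (12 + j) := by ring_nf

private lemma tau8 (m : ℕ) (hm : m ≠ 0) : m.divisors.card ^ 8 ≤ 2 ^ 10496 * m := by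
  rw [Nat.card_divisors hm]
  rw [← Finset.prod_pow]
  have key : ∀ p ∈ m.primeFactors,
      (m.factorization p + 1) ^ 8 ≤
        (if p < 256 then 2 ^ 41 else 1) * p ^ m.factorization p := by
    intro p hp
    have hp2 : 2 ≤ p := (Nat.prime_of_mem_primeFactors hp).two_le
    set k := m.factorization p
    by_cases h : p < 256
    · simp only [h, if_pos]
      exact (pow8_le k).trans (Nat.mul_le_mul_left _ (Nat.pow_le_pow_left hp2 k))
    · simp only [h, if_neg, not_false_iff, one_mul]
      push_neg at h
      calc (k + 1) ^ 8 ≤ (2 ^ k) ^ 8 := Nat.pow_le_pow_left (Nat.lt_two_pow_self (n := k)) 8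
        _ = (2 ^ 8) ^ k := by rw [← pow_mul, ← pow_mul, Nat.mul_comm]
        _ ≤ p ^ k := Nat.pow_le_pow_left h k
  calc ∏ p ∈ m.primeFactors, (m.factorization p + 1) ^ 8
      ≤ ∏ p ∈ m.primeFactors,
          (if p < 256 then 2 ^ 41 else 1) * p ^ m.factorization p :=
        Finset.prod_le_prod' key
    _ = (∏ p ∈ m.primeFactors, (if p < 256 then 2 ^ 41 else 1)) *
          ∏ p ∈ m.primeFactors, p ^ m.factorization p := Finset.prod_mul_distrib
    _ ≤ 2 ^ 10496 * m := by
        have hprod : ∏ p ∈ m.primeFactors, p ^ m.factorization p = m := by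
          conv_rhs => rw [← Nat.factorization_prod_pow_eq_self hm]
          rw [Finsupp.prod, Nat.support_factorization]
        rw [hprod]
        refine Nat.mul_le_mul_right _ ?_
        calc (∏ p ∈ m.primeFactors, (if p < 256 then 2 ^ 41 else 1) : ℕ)
            = (∏ p ∈ m.primeFactors.filter (· < 256), 2 ^ 41) *
              ∏ p ∈ m.primeFactors.filter (fun p => ¬ p < 256), (1:ℕ) :=
              Finset.prod_ite _ _
          _ = (2 ^ 41) ^ (m.primeFactors.filter (· < 256)).card := by
              rw [Finset.prod_const, Finset.prod_const, one_pow, mul_one]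
          _ ≤ (2 ^ 41) ^ 256 := by
              refine Nat.pow_le_pow_right (by norm_num) ?_
              calc (m.primeFactors.filter (· < 256)).card
                  ≤ (Finset.range 256).card := Finset.card_le_card (by
                    intro p hp
                    simp only [Finset.mem_filter] at hp
                    exact Finset.mem_range.mpr hp.2)
                _ = 256 := Finset.card_range 256
          _ = 2 ^ 10496 := by rw [← pow_mul]

private lemma tau_le (m : ℕ) (hm : m ≠ 0) :
    (m.divisors.card : ℝ) ≤ 2 ^ 1312 * (m : ℝ) ^ ((1:ℝ)/8) := by
  have h0 : (0:ℝ) ≤ (m:ℝ) := Nat.cast_nonneg m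
  have hrhs : (0:ℝ) ≤ 2 ^ 1312 * (m : ℝ) ^ ((1:ℝ)/8) := by positivity
  refine le_of_pow_le_pow_left₀ (n := 8) (by norm_num) hrhs ?_
  have : ((2:ℝ) ^ 1312 * (m : ℝ) ^ ((1:ℝ)/8)) ^ (8:ℕ) = 2 ^ 10496 * (m:ℝ) := by
    rw [mul_pow, ← pow_mul, ← Real.rpow_natCast ((m:ℝ) ^ ((1:ℝ)/8)) 8,
      ← Real.rpow_mul h0]
    norm_num
  rw [this]
  have := tau8 m hm
  calc ((m.divisors.card : ℝ)) ^ (8:ℕ) = ((m.divisors.card ^ 8 : ℕ) : ℝ) := by push_cast; ring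
    _ ≤ ((2 ^ 10496 * m : ℕ) : ℝ) := Nat.cast_le.mpr this
    _ = 2 ^ 10496 * (m:ℝ) := by push_cast; ring

private lemma ord_pos (a n : ℕ) [NeZero n] (h : Nat.Coprime a n) :
    0 < orderOf ((a : ZMod n)) := by
  obtain ⟨u, hu⟩ := (ZMod.isUnit_iff_coprime a n).mpr h
  rw [← hu, orderOf_units]
  exact orderOf_pos u

private lemma ord_dvd (a n : ℕ) (ha : 1 ≤ a) [NeZero n] :
    n ∣ a ^ orderOf ((a : ZMod n)) - 1 := by
  set d := orderOf ((a : ZMod n))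
  have h1 : ((a : ZMod n)) ^ d = 1 := pow_orderOf_eq_one _
  have had : 1 ≤ a ^ d := Nat.one_le_pow _ _ ha
  rw [← ZMod.natCast_eq_zero_iff]
  push_cast [Nat.cast_sub had]
  rw [h1]
  ring

open scoped Classical in
theorem stmt_5 (a : ℕ) (ha : 2 ≤ a) :
    ∃ C : ℝ, 0 < C ∧ ∀ x : ℝ, 2 ≤ x →
      ∑ n ∈ (Finset.Icc 1 ⌊x⌋₊).filter
          (fun n => Nat.Coprime n a ∧
            (orderOf (a : ZMod n) : ℝ) ≤ 3 * Real.log x / Real.log a),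
          (n : ℝ) / (orderOf (a : ZMod n) : ℝ)
        ≤ C * x ^ ((3 : ℝ) / 2) * Real.log x := by
  have hlog2 : (0:ℝ) < Real.log 2 := Real.log_pos one_lt_two
  refine ⟨2 ^ 1312 * 3 / Real.log 2, by positivity, ?_⟩
  intro x hx
  have hx0 : (0:ℝ) < x := by linarith
  have hx1 : (1:ℝ) ≤ x := by linarith
  have hlogx : (0:ℝ) < Real.log x := Real.log_pos (by linarith)
  have ha1 : (1:ℝ) < (a:ℝ) := by exact_mod_cast Nat.lt_of_lt_of_le one_lt_two ha
  have hloga : (0:ℝ) < Real.log a := Real.log_pos ha1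
  have hlog2a : Real.log 2 ≤ Real.log a := by
    apply Real.log_le_log (by norm_num)
    exact_mod_cast ha
  set D : ℝ := 3 * Real.log x / Real.log (a:ℝ) with hD
  have hD0 : 0 ≤ D := by positivity
  set N : ℕ := ⌊D⌋₊ with hN
  set S := (Finset.Icc 1 ⌊x⌋₊).filter
      (fun n => Nat.Coprime n a ∧
        (orderOf (a : ZMod n) : ℝ) ≤ 3 * Real.log x / Real.log a) with hS
  have hmem : ∀ n ∈ S, 1 ≤ n ∧ (n:ℝ) ≤ x ∧ Nat.Coprime n a ∧
      (orderOf (a : ZMod n) : ℝ) ≤ D := by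
    intro n hn
    rw [hS, Finset.mem_filter, Finset.mem_Icc] at hn
    refine ⟨hn.1.1, ?_, hn.2.1, hn.2.2⟩
    calc (n:ℝ) ≤ (⌊x⌋₊ : ℝ) := Nat.cast_le.mpr hn.1.2
      _ ≤ x := Nat.floor_le hx0.le
  have hsub : S ⊆ (Finset.Icc 1 N).biUnion (fun d => (a ^ d - 1).divisors) := by
    intro n hn
    obtain ⟨hn1, hnx, hcop, hord⟩ := hmem n hn
    have : NeZero n := ⟨by omega⟩
    set d := orderOf ((a : ZMod n)) with hd
    have hd0 : 0 < d := ord_pos a n hcop.symm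
    rw [Finset.mem_biUnion]
    refine ⟨d, Finset.mem_Icc.mpr ⟨hd0, Nat.le_floor hord⟩, ?_⟩
    rw [Nat.mem_divisors]
    have h2 : 2 ≤ a ^ d := le_trans ha (Nat.le_self_pow hd0.ne' a)
    exact ⟨ord_dvd a n (by omega), by omega⟩
  have hterm : ∀ n ∈ S, (n : ℝ) / (orderOf (a : ZMod n) : ℝ) ≤ x := by
    intro n hn
    obtain ⟨hn1, hnx, hcop, hord⟩ := hmem n hn
    have : NeZero n := ⟨by omega⟩
    have hd0 : 0 < orderOf ((a : ZMod n)) := ord_pos a n hcop.symm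
    calc (n : ℝ) / (orderOf (a : ZMod n) : ℝ) ≤ (n:ℝ) :=
          div_le_self (by positivity) (by exact_mod_cast hd0)
      _ ≤ x := hnx
  have htau : ∀ d ∈ Finset.Icc 1 N,
      ((a ^ d - 1).divisors.card : ℝ) ≤ 2 ^ 1312 * x ^ ((1:ℝ)/2) := by
    intro d hd
    rw [Finset.mem_Icc] at hd
    have hd1 : 1 ≤ d := hd.1
    have hdD : (d : ℝ) ≤ D := le_trans (Nat.cast_le.mpr hd.2) (Nat.floor_le hD0)
    have hda : (d:ℝ) * Real.log a ≤ 3 * Real.log x := by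
      rw [hD, div_eq_mul_inv] at hdD
      calc (d:ℝ) * Real.log a ≤ 3 * Real.log x * (Real.log a)⁻¹ * Real.log a :=
            mul_le_mul_of_nonneg_right hdD hloga.le
        _ = 3 * Real.log x := by field_simp
    have hax : ((a:ℝ)) ^ d ≤ x ^ (3:ℕ) := by
      have hl : Real.log ((a:ℝ) ^ d) ≤ Real.log (x ^ (3:ℕ)) := by
        rw [Real.log_pow, Real.log_pow]
        exact_mod_cast hda
      exact (Real.log_le_log_iff (by positivity) (by positivity)).mp hl
    have hm0 : a ^ d - 1 ≠ 0 := by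
      have h2 : 2 ≤ a ^ d := le_trans ha (Nat.le_self_pow (by omega) a)
      omega
    have hmle : ((a ^ d - 1 : ℕ) : ℝ) ≤ x ^ (3:ℕ) := by
      calc ((a ^ d - 1 : ℕ) : ℝ) ≤ ((a ^ d : ℕ) : ℝ) := by
            exact_mod_cast Nat.sub_le _ _
        _ = ((a:ℝ)) ^ d := by push_cast; ring
        _ ≤ x ^ (3:ℕ) := hax
    calc ((a ^ d - 1).divisors.card : ℝ)
        ≤ 2 ^ 1312 * ((a ^ d - 1 : ℕ) : ℝ) ^ ((1:ℝ)/8) := tau_le _ hm0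
      _ ≤ 2 ^ 1312 * (x ^ (3:ℕ)) ^ ((1:ℝ)/8) := by
          refine mul_le_mul_of_nonneg_left ?_ (by positivity)
          exact Real.rpow_le_rpow (Nat.cast_nonneg _) hmle (by norm_num)
      _ = 2 ^ 1312 * x ^ ((3:ℝ)/8) := by
          rw [← Real.rpow_natCast x 3, ← Real.rpow_mul hx0.le]
          norm_num
      _ ≤ 2 ^ 1312 * x ^ ((1:ℝ)/2) := by
          refine mul_le_mul_of_nonneg_left ?_ (by positivity)
          exact Real.rpow_le_rpow_of_exponent_le hx1 (by norm_num)
  have hcard : (S.card : ℝ) ≤ (N:ℝ) * (2 ^ 1312 * x ^ ((1:ℝ)/2)) := by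
    have h1 : S.card ≤ ∑ d ∈ Finset.Icc 1 N, (a ^ d - 1).divisors.card :=
      le_trans (Finset.card_le_card hsub) (Finset.card_biUnion_le)
    calc (S.card : ℝ) ≤ ∑ d ∈ Finset.Icc 1 N, ((a ^ d - 1).divisors.card : ℝ) := by
          exact_mod_cast h1
      _ ≤ ∑ d ∈ Finset.Icc 1 N, (2 ^ 1312 * x ^ ((1:ℝ)/2)) :=
          Finset.sum_le_sum htau
      _ = ((Finset.Icc 1 N).card : ℝ) * (2 ^ 1312 * x ^ ((1:ℝ)/2)) := by
          rw [Finset.sum_const, nsmul_eq_mul]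
      _ ≤ (N:ℝ) * (2 ^ 1312 * x ^ ((1:ℝ)/2)) := by
          have : (Finset.Icc 1 N).card ≤ N := by
            rw [Nat.card_Icc]; omega
          refine mul_le_mul_of_nonneg_right ?_ (by positivity)
          exact_mod_cast this
  have hND : (N:ℝ) ≤ 3 * Real.log x / Real.log 2 := by
    calc (N:ℝ) ≤ D := Nat.floor_le hD0
      _ ≤ 3 * Real.log x / Real.log 2 := by
        rw [hD]
        exact div_le_div_of_nonneg_left (by positivity) hlog2 hlog2a
  have hsum : ∑ n ∈ S, (n : ℝ) / (orderOf (a : ZMod n) : ℝ) ≤ (S.card : ℝ) * x := by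
    have := Finset.sum_le_card_nsmul S _ x hterm
    rwa [nsmul_eq_mul] at this
  have hxx : x * x ^ ((1:ℝ)/2) = x ^ ((3:ℝ)/2) := by
    rw [show (3:ℝ)/2 = 1 + 1/2 by norm_num, Real.rpow_add hx0, Real.rpow_one]
  calc ∑ n ∈ S, (n : ℝ) / (orderOf (a : ZMod n) : ℝ)
      ≤ (S.card : ℝ) * x := hsum
    _ ≤ ((N:ℝ) * (2 ^ 1312 * x ^ ((1:ℝ)/2))) * x := by
        refine mul_le_mul_of_nonneg_right hcard hx0.le
    _ ≤ ((3 * Real.log x / Real.log 2) * (2 ^ 1312 * x ^ ((1:ℝ)/2))) * x := by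
        refine mul_le_mul_of_nonneg_right (mul_le_mul_of_nonneg_right hND (by positivity)) hx0.le
    _ = 2 ^ 1312 * 3 / Real.log 2 * (x * x ^ ((1:ℝ)/2)) * Real.log x := by ring
    _ = 2 ^ 1312 * 3 / Real.log 2 * x ^ ((3:ℝ)/2) * Real.log x := by rw [hxx]
end

section
/- Let K be a number field with ring of integers O_K and fix a real number β > 0. There exists a constant C > 0 such that for all real x ≥ 16, the number of nonzero ideals I of O_K with N(I) ≤ x and ω(I) ≥ (log x)^β is at most C · x · (log log x)² / (log x)^(2β). -/
open NumberField

/-- The number of distinct prime ideals dividing an ideal. -/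
noncomputable def omegaIdeal {K : Type*} [Field K] [NumberField K]
    (I : Ideal (𝓞 K)) : ℕ :=
  {P : Ideal (𝓞 K) | P.IsPrime ∧ P ∣ I}.ncard

namespace Stmt7Aux

attribute [local instance] Classical.propDecidable

set_option maxHeartbeats 1000000
set_option synthInstance.maxHeartbeats 80000
set_option linter.unusedSectionVars false

open UniqueFactorizationMonoid Finset

variable {K : Type*} [Field K] [NumberField K]

/-- The degree. -/
noncomputable def dK (K : Type*) [Field K] [NumberField K] : ℕ :=
  Fintype.card (Module.Free.ChooseBasisIndex ℤ (𝓞 K))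

lemma finT (K : Type*) [Field K] [NumberField K] (n : ℕ) :
    {I : Ideal (𝓞 K) | I ≠ ⊥ ∧ Ideal.absNorm I ≤ n}.Finite :=
  (Ideal.finite_setOf_absNorm_le n).subset fun _ hI => hI.2

lemma finP (K : Type*) [Field K] [NumberField K] (n : ℕ) :
    {P : Ideal (𝓞 K) | Prime P ∧ Ideal.absNorm P ≤ n}.Finite :=
  (Ideal.finite_setOf_absNorm_le n).subset fun _ hP => hP.2

noncomputable def TF (K : Type*) [Field K] [NumberField K] (n : ℕ) : Finset (Ideal (𝓞 K)) :=
  (finT K n).toFinset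

noncomputable def PF (K : Type*) [Field K] [NumberField K] (n : ℕ) : Finset (Ideal (𝓞 K)) :=
  (finP K n).toFinset

lemma mem_TF {n : ℕ} {I : Ideal (𝓞 K)} : I ∈ TF K n ↔ I ≠ ⊥ ∧ Ideal.absNorm I ≤ n :=
  Set.Finite.mem_toFinset _

lemma mem_PF {n : ℕ} {P : Ideal (𝓞 K)} : P ∈ PF K n ↔ Prime P ∧ Ideal.absNorm P ≤ n :=
  Set.Finite.mem_toFinset _

/-- exponent of `P` in `I`. -/
noncomputable def cnt (I P : Ideal (𝓞 K)) : ℕ := (normalizedFactors I).count P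

lemma norm_pos {I : Ideal (𝓞 K)} (hI : I ≠ ⊥) : 0 < Ideal.absNorm I :=
  Nat.pos_of_ne_zero fun h => hI (Ideal.absNorm_eq_zero_iff.mp h)

lemma two_le_norm {P : Ideal (𝓞 K)} (hP : Prime P) : 2 ≤ Ideal.absNorm P := by
  have h0 : P ≠ ⊥ := by simpa [Submodule.zero_eq_bot] using hP.ne_zero
  have h1 : Ideal.absNorm P ≠ 0 := fun h => h0 (Ideal.absNorm_eq_zero_iff.mp h)
  have h2 : Ideal.absNorm P ≠ 1 := fun h =>
    hP.not_unit (Ideal.isUnit_iff.mpr (Ideal.absNorm_eq_one_iff.mp h))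
  omega

lemma absNorm_dvd {A B : Ideal (𝓞 K)} (h : A ∣ B) :
    Ideal.absNorm A ∣ Ideal.absNorm B := by
  obtain ⟨C, rfl⟩ := h
  exact ⟨Ideal.absNorm C, _root_.map_mul Ideal.absNorm A C⟩

lemma factor_mem_PF {n : ℕ} {I P : Ideal (𝓞 K)} (hI : I ≠ ⊥) (hIn : Ideal.absNorm I ≤ n)
    (hP : P ∈ normalizedFactors I) : P ∈ PF K n := by
  have hprime := prime_of_normalized_factor P hP
  have hdvd : Ideal.absNorm P ∣ Ideal.absNorm I :=
    absNorm_dvd (dvd_of_mem_normalizedFactors hP)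
  exact mem_PF.mpr ⟨hprime, le_trans (Nat.le_of_dvd (norm_pos hI) hdvd) hIn⟩

lemma ne_zero_of_ne_bot {I : Ideal (𝓞 K)} (hI : I ≠ ⊥) : I ≠ 0 := by
  simpa [Submodule.zero_eq_bot] using hI

lemma prod_cnt {n : ℕ} {I : Ideal (𝓞 K)} (hI : I ≠ ⊥) (hIn : Ideal.absNorm I ≤ n) :
    I = ∏ P ∈ PF K n, P ^ cnt I P := by
  have h0 : I ≠ 0 := ne_zero_of_ne_bot hI
  have h1 : (normalizedFactors I).prod = I := associated_iff_eq.mp (prod_normalizedFactors h0)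
  calc I = (normalizedFactors I).prod := h1.symm
    _ = ∏ P ∈ (normalizedFactors I).toFinset, P ^ (normalizedFactors I).count P :=
        Finset.prod_multiset_count _
    _ = ∏ P ∈ PF K n, P ^ cnt I P := by
        refine Finset.prod_subset (fun P hP => factor_mem_PF hI hIn (Multiset.mem_toFinset.mp hP))
          fun P _ hnP => ?_
        rw [show (normalizedFactors I).count P = cnt I P from rfl] at *
        rw [cnt, Multiset.count_eq_zero_of_notMem (fun h => hnP (Multiset.mem_toFinset.mpr h)), pow_zero]

lemma cnt_dvd {I P : Ideal (𝓞 K)} (hI : I ≠ ⊥) : P ^ cnt I P ∣ I := by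
  have h0 : I ≠ 0 := ne_zero_of_ne_bot hI
  have h1 : (normalizedFactors I).prod = I := associated_iff_eq.mp (prod_normalizedFactors h0)
  have h2 : Multiset.replicate (cnt I P) P ≤ normalizedFactors I := by
    rw [Multiset.le_iff_count]
    intro a
    rcases eq_or_ne a P with rfl | ha
    · simp [Multiset.count_replicate, cnt]
    · simp [Multiset.count_replicate, ha.symm]
  calc P ^ cnt I P = (Multiset.replicate (cnt I P) P).prod := (Multiset.prod_replicate _ _).symm
    _ ∣ (normalizedFactors I).prod := Multiset.prod_dvd_prod_of_le h2
    _ = I := h1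

lemma cnt_le {n : ℕ} {I P : Ideal (𝓞 K)} (hI : I ≠ ⊥) (hIn : Ideal.absNorm I ≤ n)
    (hPF : P ∈ PF K n) : cnt I P ≤ n := by
  have h2 : 2 ≤ Ideal.absNorm P := two_le_norm (mem_PF.mp hPF).1
  have hd : (Ideal.absNorm P) ^ cnt I P ∣ Ideal.absNorm I := by
    simpa [map_pow] using absNorm_dvd (cnt_dvd (P := P) hI)
  have h3 : 2 ^ cnt I P ≤ n :=
    le_trans (le_trans (Nat.pow_le_pow_left h2 _) (Nat.le_of_dvd (norm_pos hI) hd)) hIn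
  have h4 : cnt I P < 2 ^ cnt I P := Nat.lt_two_pow_self
  omega

lemma norm_prod {n : ℕ} {I : Ideal (𝓞 K)} (hI : I ≠ ⊥) (hIn : Ideal.absNorm I ≤ n) :
    Ideal.absNorm I = ∏ P ∈ PF K n, (Ideal.absNorm P) ^ cnt I P := by
  have := congrArg Ideal.absNorm (prod_cnt hI hIn)
  simpa [map_prod, map_pow] using this

lemma omega_eq {n : ℕ} {I : Ideal (𝓞 K)} (hI : I ≠ ⊥) (hIn : Ideal.absNorm I ≤ n) :
    omegaIdeal I = ((PF K n).filter fun P => cnt I P ≠ 0).card := by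
  have h0 : I ≠ 0 := ne_zero_of_ne_bot hI
  have hset : {P : Ideal (𝓞 K) | P.IsPrime ∧ P ∣ I} =
      ↑((PF K n).filter fun P => cnt I P ≠ 0) := by
    ext P
    simp only [Set.mem_setOf_eq, Finset.coe_filter, mem_PF, Set.mem_setOf_eq]
    constructor
    · rintro ⟨hp, hdvd⟩
      have hPbot : P ≠ ⊥ := by
        rintro rfl
        rw [← Submodule.zero_eq_bot] at hdvd
        exact hI (by simpa [Submodule.zero_eq_bot] using zero_dvd_iff.mp hdvd)
      have hprime : Prime P := (Ideal.prime_iff_isPrime hPbot).mpr hp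
      have hmem : P ∈ normalizedFactors I := (mem_normalizedFactors_iff h0).mpr ⟨hprime, hdvd⟩
      refine ⟨⟨hprime, ?_⟩, Multiset.count_ne_zero.mpr hmem⟩
      exact le_trans (Nat.le_of_dvd (norm_pos hI)
        (absNorm_dvd (dvd_of_mem_normalizedFactors hmem))) hIn
    · rintro ⟨⟨hprime, _⟩, hcnt⟩
      have hmem : P ∈ normalizedFactors I := Multiset.count_ne_zero.mp hcnt
      have hPbot : P ≠ ⊥ := by simpa [Submodule.zero_eq_bot] using hprime.ne_zero
      exact ⟨(Ideal.prime_iff_isPrime hPbot).mp hprime, dvd_of_mem_normalizedFactors hmem⟩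
  rw [omegaIdeal, hset, Set.ncard_coe_finset]

/-- Expansion: sum over ideals is at most product over primes of sums. -/
lemma sum_le_prod_sum (n : ℕ) (g : Ideal (𝓞 K) → ℕ → ℝ) (hg1 : ∀ P, g P 0 = 1)
    (hg0 : ∀ P e, 0 ≤ g P e) :
    ∑ I ∈ TF K n, ∏ P ∈ PF K n, g P (cnt I P) ≤
      ∏ P ∈ PF K n, ∑ e ∈ Finset.range (n + 1), g P e := by
  set ι : Ideal (𝓞 K) → (∀ a ∈ PF K n, ℕ) := fun I => fun P _ => cnt I P with hι
  have hinj : ∀ I ∈ TF K n, ∀ J ∈ TF K n, ι I = ι J → I = J := by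
    intro I hI J hJ h
    obtain ⟨hIb, hIn⟩ := mem_TF.mp hI
    obtain ⟨hJb, hJn⟩ := mem_TF.mp hJ
    rw [prod_cnt hIb hIn (n := n), prod_cnt hJb hJn (n := n)]
    refine Finset.prod_congr rfl fun P hP => ?_
    have hc : cnt I P = cnt J P := congrFun (congrFun h P) hP
    rw [hc]
  set F : (∀ a ∈ PF K n, ℕ) → ℝ := fun φ => ∏ x ∈ (PF K n).attach, g x.1 (φ x.1 x.2) with hF
  calc ∑ I ∈ TF K n, ∏ P ∈ PF K n, g P (cnt I P)
      = ∑ I ∈ TF K n, F (ι I) := by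
        refine Finset.sum_congr rfl fun I _ => ?_
        exact (Finset.prod_attach _ fun P => g P (cnt I P)).symm
    _ = ∑ φ ∈ (TF K n).image ι, F φ := (Finset.sum_image hinj).symm
    _ ≤ ∑ φ ∈ (PF K n).pi fun _ => Finset.range (n + 1), F φ := by
        refine Finset.sum_le_sum_of_subset_of_nonneg ?_ fun φ _ _ =>
          Finset.prod_nonneg fun x _ => hg0 _ _
        intro φ hφ
        obtain ⟨I, hI, rfl⟩ := Finset.mem_image.mp hφ
        obtain ⟨hIb, hIn⟩ := mem_TF.mp hI
        refine Finset.mem_pi.mpr fun P hP => ?_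
        exact Finset.mem_range.mpr (Nat.lt_succ_of_le (cnt_le hIb hIn hP))
    _ = ∏ P ∈ PF K n, ∑ e ∈ Finset.range (n + 1), g P e := by
        rw [Finset.prod_sum]

section Analytic

variable {s : ℝ}

lemma r_pos {q : ℕ} (hq : 2 ≤ q) : 0 < (q : ℝ) ^ (-s) :=
  Real.rpow_pos_of_pos (by positivity) _

lemma r_le_half {q : ℕ} (hq : 2 ≤ q) (hs : 1 < s) : (q : ℝ) ^ (-s) ≤ 1 / 2 := by
  have h2 : (2 : ℝ) ≤ (q : ℝ) ^ s := by
    calc (2 : ℝ) = (2 : ℝ) ^ (1 : ℝ) := (Real.rpow_one 2).symm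
      _ ≤ (2 : ℝ) ^ s := Real.rpow_le_rpow_of_exponent_le one_le_two hs.le
      _ ≤ (q : ℝ) ^ s := Real.rpow_le_rpow (by norm_num) (by exact_mod_cast hq) (by linarith)
  rw [Real.rpow_neg (by positivity)]
  rw [inv_le_comm₀ (by linarith) (by norm_num)]
  linarith

lemma r_lt_one {q : ℕ} (hq : 2 ≤ q) (hs : 1 < s) : (q : ℝ) ^ (-s) < 1 :=
  lt_of_le_of_lt (r_le_half hq hs) (by norm_num)

/-- The local factor bound. -/
lemma sum_g_le {q : ℕ} (hq : 2 ≤ q) (hs : 1 < s) (m : ℕ) :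
    ∑ e ∈ Finset.range (m + 1), (if e = 0 then (1 : ℝ) else 2) * ((q : ℝ) ^ (-s)) ^ e ≤
      ((1 - (q : ℝ) ^ (-s))⁻¹) ^ 2 := by
  set r : ℝ := (q : ℝ) ^ (-s) with hr
  have hr0 : 0 ≤ r := (r_pos hq).le
  have hr1 : r < 1 := r_lt_one hq hs
  have hgeom : ∑ e ∈ Finset.range (m + 1), r ^ e ≤ (1 - r)⁻¹ := by
    have := tsum_geometric_of_lt_one hr0 hr1
    calc ∑ e ∈ Finset.range (m + 1), r ^ e ≤ ∑' e : ℕ, r ^ e :=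
        Summable.sum_le_tsum _ (fun i _ => by positivity) (summable_geometric_of_lt_one hr0 hr1)
      _ = (1 - r)⁻¹ := this
  have hsplit : ∑ e ∈ Finset.range (m + 1), (if e = 0 then (1 : ℝ) else 2) * r ^ e =
      2 * (∑ e ∈ Finset.range (m + 1), r ^ e) - 1 := by
    rw [Finset.mul_sum]
    rw [show (1 : ℝ) = ∑ e ∈ Finset.range (m + 1), (if e = 0 then (1 : ℝ) else 0) by
      rw [Finset.sum_ite_eq' (Finset.range (m + 1)) 0 (fun _ => (1 : ℝ))]
      simp]
    rw [← Finset.sum_sub_distrib]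
    refine Finset.sum_congr rfl fun e _ => ?_
    rcases eq_or_ne e 0 with rfl | he
    · norm_num
    · simp [he]
  rw [hsplit]
  have hinv : 1 ≤ (1 - r)⁻¹ := by
    rw [le_inv_comm₀ (by norm_num) (by linarith)]
    linarith
  nlinarith [hgeom, sq_nonneg ((1 - r)⁻¹ - 1)]

/-- The rational prime below a prime ideal is in the ideal. -/
lemma minFac_mem {P : Ideal (𝓞 K)} (hP : Prime P) :
    ((Ideal.absNorm P).minFac : 𝓞 K) ∈ P := by
  set q := Ideal.absNorm P with hq
  have hq2 : 2 ≤ q := two_le_norm hP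
  set p := q.minFac with hp
  have hpp : p.Prime := Nat.minFac_prime (by omega)
  set k := q.factorization p with hk
  set m := q / p ^ k with hm
  have hqm : p ^ k * m = q := Nat.ordProj_mul_ordCompl_eq_self q p
  have hpm : ¬ p ∣ m := Nat.not_dvd_ordCompl hpp (by omega)
  have hPprime : P.IsPrime := (Ideal.prime_iff_isPrime
    (by simpa [Submodule.zero_eq_bot] using hP.ne_zero)).mp hP
  have hmemq : ((q : 𝓞 K)) ∈ P := Ideal.absNorm_mem P
  have : ((p : 𝓞 K)) ^ k * (m : 𝓞 K) ∈ P := by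
    have : (((p ^ k * m : ℕ) : 𝓞 K)) ∈ P := by rw [hqm]; exact hmemq
    push_cast at this
    exact this
  rcases hPprime.mem_or_mem this with h | h
  · exact hPprime.mem_of_pow_mem _ h
  · exfalso
    have hle : Ideal.span {((m : 𝓞 K))} ≤ P := by
      rw [Ideal.span_le, Set.singleton_subset_iff]; exact h
    have hdvd : Ideal.absNorm P ∣ Ideal.absNorm (Ideal.span {((m : 𝓞 K))}) :=
      absNorm_dvd (Ideal.dvd_iff_le.mpr hle)
    have hnorm : Ideal.absNorm (Ideal.span {((m : 𝓞 K))}) = m ^ dK K := by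
      rw [Ideal.absNorm_span_singleton]
      rw [show ((m : 𝓞 K)) = algebraMap ℤ (𝓞 K) (m : ℤ) by push_cast; ring]
      rw [Algebra.norm_algebraMap_of_basis (Module.Free.chooseBasis ℤ (𝓞 K))]
      rw [dK]
      push_cast
      exact Int.natAbs_pow _ _
    rw [hnorm] at hdvd
    have hpq : p ∣ q := Nat.minFac_dvd q
    have : p ∣ m ^ dK K := dvd_trans hpq hdvd
    exact hpm (hpp.dvd_of_dvd_pow this)

lemma card_fiber_le (n : ℕ) {p : ℕ} (hpp : p.Prime) :
    ((PF K n).filter fun P => (Ideal.absNorm P).minFac = p).card ≤ dK K := by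
  set F := (PF K n).filter fun P => (Ideal.absNorm P).minFac = p with hF
  have hprime : ∀ P ∈ F, Prime P := fun P hP => (mem_PF.mp (Finset.mem_filter.mp hP).1).1
  have hdvd : ∀ P ∈ F, P ∣ Ideal.span {((p : 𝓞 K))} := by
    intro P hP
    have h1 : ((p : 𝓞 K)) ∈ P := by
      have := minFac_mem (hprime P hP)
      rwa [(Finset.mem_filter.mp hP).2] at this
    exact Ideal.dvd_iff_le.mpr (by rw [Ideal.span_le, Set.singleton_subset_iff]; exact h1)
  have hprod : ∏ P ∈ F, P ∣ Ideal.span {((p : 𝓞 K))} :=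
    Finset.prod_primes_dvd _ hprime hdvd
  have hnorm : ∏ P ∈ F, Ideal.absNorm P ∣ p ^ dK K := by
    have h1 : Ideal.absNorm (∏ P ∈ F, P) ∣ Ideal.absNorm (Ideal.span {((p : 𝓞 K))}) :=
      absNorm_dvd hprod
    have h2 : Ideal.absNorm (Ideal.span {((p : 𝓞 K))}) = p ^ dK K := by
      rw [Ideal.absNorm_span_singleton]
      rw [show ((p : 𝓞 K)) = algebraMap ℤ (𝓞 K) (p : ℤ) by push_cast; ring]
      rw [Algebra.norm_algebraMap_of_basis (Module.Free.chooseBasis ℤ (𝓞 K))]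
      rw [dK]
      push_cast
      exact Int.natAbs_pow _ _
    rw [map_prod] at h1
    rwa [h2] at h1
  have hpk : p ^ F.card ∣ ∏ P ∈ F, Ideal.absNorm P := by
    have := Finset.prod_dvd_prod_of_dvd (fun _ : Ideal (𝓞 K) => p)
      (fun P => Ideal.absNorm P) (s := F) (fun P hP => by
        have := minFac_mem (hprime P hP)
        have hd : (Ideal.absNorm P).minFac ∣ Ideal.absNorm P := Nat.minFac_dvd _
        rwa [(Finset.mem_filter.mp hP).2] at hd)
    simpa [Finset.prod_const] using this
  exact (Nat.pow_dvd_pow_iff_le_right hpp.one_lt).mp (hpk.trans hnorm)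

lemma one_le_inv_one_sub {q : ℕ} (hq : 2 ≤ q) (hs : 1 < s) :
    1 ≤ (1 - (q : ℝ) ^ (-s))⁻¹ := by
  have h1 := r_le_half hq hs
  have h0 := r_pos (s := s) hq
  rw [le_inv_comm₀ (by norm_num) (by linarith)]
  linarith

/-- Grouping prime ideals by the rational prime below them. -/
lemma prod_PF_le (n : ℕ) (hs : 1 < s) :
    ∏ P ∈ PF K n, ((1 - (Ideal.absNorm P : ℝ) ^ (-s))⁻¹) ^ 2 ≤
      ∏ p ∈ Nat.primesBelow (n + 1), (((1 - (p : ℝ) ^ (-s))⁻¹) ^ 2) ^ dK K := by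
  have hmaps : ∀ P ∈ PF K n, (Ideal.absNorm P).minFac ∈ Nat.primesBelow (n + 1) := by
    intro P hP
    obtain ⟨hPp, hPn⟩ := mem_PF.mp hP
    have h2 := two_le_norm hPp
    have hpp : (Ideal.absNorm P).minFac.Prime := Nat.minFac_prime (by omega)
    refine Nat.mem_primesBelow.mpr ⟨?_, hpp⟩
    have := Nat.minFac_le (show 0 < Ideal.absNorm P by omega)
    exact Nat.lt_succ_of_le (le_trans this hPn)
  rw [← Finset.prod_fiberwise_of_maps_to hmaps
    (fun P => ((1 - (Ideal.absNorm P : ℝ) ^ (-s))⁻¹) ^ 2)]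
  refine Finset.prod_le_prod (fun p _ => Finset.prod_nonneg fun P _ => by positivity)
    fun p hp => ?_
  have hpp : p.Prime := (Nat.mem_primesBelow.mp hp).2
  calc ∏ P ∈ (PF K n).filter (fun P => (Ideal.absNorm P).minFac = p),
        ((1 - (Ideal.absNorm P : ℝ) ^ (-s))⁻¹) ^ 2
      ≤ ∏ _P ∈ (PF K n).filter (fun P => (Ideal.absNorm P).minFac = p),
        ((1 - (p : ℝ) ^ (-s))⁻¹) ^ 2 := by
        refine Finset.prod_le_prod (fun P _ => by positivity) fun P hP => ?_
        obtain ⟨hPmem, hPfac⟩ := Finset.mem_filter.mp hP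
        obtain ⟨hPp, _⟩ := mem_PF.mp hPmem
        have h2 := two_le_norm hPp
        have hple : p ≤ Ideal.absNorm P := by
          rw [← hPfac]; exact Nat.minFac_le (by omega)
        have hr1 : (Ideal.absNorm P : ℝ) ^ (-s) ≤ (p : ℝ) ^ (-s) := by
          rw [Real.rpow_neg (by positivity), Real.rpow_neg (by positivity)]
          refine inv_anti₀ (Real.rpow_pos_of_pos (by exact_mod_cast hpp.pos) _) ?_
          exact Real.rpow_le_rpow (by positivity) (by exact_mod_cast hple) (by linarith)
        have hp1 := r_lt_one (s := s) hpp.two_le hs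
        have hq1 := r_lt_one (s := s) (q := Ideal.absNorm P) (by omega) hs
        have h10 : (0:ℝ) < 1 - (p : ℝ) ^ (-s) := by linarith
        have h20 : (0:ℝ) < 1 - (Ideal.absNorm P : ℝ) ^ (-s) := by linarith
        have hmono : (1 - (Ideal.absNorm P : ℝ) ^ (-s))⁻¹ ≤ (1 - (p : ℝ) ^ (-s))⁻¹ :=
          inv_anti₀ h10 (by linarith)
        exact pow_le_pow_left₀ (by positivity) hmono 2
      _ = (((1 - (p : ℝ) ^ (-s))⁻¹) ^ 2) ^
            ((PF K n).filter (fun P => (Ideal.absNorm P).minFac = p)).card :=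
        Finset.prod_const _
      _ ≤ (((1 - (p : ℝ) ^ (-s))⁻¹) ^ 2) ^ dK K := by
        refine pow_le_pow_right₀ ?_ (card_fiber_le n hpp)
        have := one_le_inv_one_sub (s := s) hpp.two_le hs
        nlinarith

/-- The multiplicative function `n ↦ n ^ (-s)`. -/
noncomputable def zfun (s : ℝ) : ℕ →* ℝ where
  toFun n := (n : ℝ) ^ (-s)
  map_one' := by simp
  map_mul' m n := by
    push_cast
    exact Real.mul_rpow (Nat.cast_nonneg m) (Nat.cast_nonneg n)

lemma zfun_apply (s : ℝ) (n : ℕ) : zfun s n = (n : ℝ) ^ (-s) := rfl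

lemma summable_zfun (hs : 1 < s) : Summable fun n : ℕ => (n : ℝ) ^ (-s) :=
  Real.summable_nat_rpow.mpr (by linarith)

lemma partial_zeta_le (hs : 1 < s) (n : ℕ) :
    ∑ i ∈ Finset.range n, ((i : ℝ)) ^ (-s) ≤ 1 + 1 / (s - 1) := by
  have key : ∀ m : ℕ, 2 ≤ m → ∑ i ∈ Finset.range m, ((i : ℝ)) ^ (-s) ≤ 1 + 1 / (s - 1) := by
    intro m hm
    have hsplit : ∑ i ∈ Finset.range m, ((i : ℝ)) ^ (-s) =
        (∑ i ∈ Finset.range 2, ((i : ℝ)) ^ (-s)) + ∑ i ∈ Finset.Ico 2 m, ((i : ℝ)) ^ (-s) := by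
      rw [Finset.range_eq_Ico]
      exact (Finset.sum_Ico_consecutive _ (by omega) hm).symm
    have h01 : ∑ i ∈ Finset.range 2, ((i : ℝ)) ^ (-s) = 1 := by
      rw [Finset.sum_range_succ, Finset.sum_range_one, Nat.cast_zero, Nat.cast_one,
        Real.zero_rpow (by linarith), Real.one_rpow]
      norm_num
    have htail : ∑ i ∈ Finset.Ico 2 m, ((i : ℝ)) ^ (-s) ≤ 1 / (s - 1) := by
      have hmm : (1 : ℕ) ≤ m - 1 := by omega
      have hanti : AntitoneOn (fun t : ℝ => t ^ (-s)) (Set.Icc ((1 : ℕ) : ℝ) ((m - 1 : ℕ) : ℝ)) := by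
        intro u hu v hv huv
        simp only
        rw [Real.rpow_neg (le_trans (by norm_num) hu.1), Real.rpow_neg
          (le_trans (by norm_num) (hu.1.trans huv))]
        refine inv_anti₀ (Real.rpow_pos_of_pos (by simp at hu; linarith [hu.1]) _) ?_
        refine Real.rpow_le_rpow ?_ huv (by linarith)
        simp at hu; linarith [hu.1]
      have hint := AntitoneOn.sum_le_integral_Ico hmm hanti
      have hreindex : ∑ i ∈ Finset.Ico 1 (m - 1), ((((i + 1) : ℕ) : ℝ)) ^ (-s) =
          ∑ i ∈ Finset.Ico 2 m, ((i : ℝ)) ^ (-s) := by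
        rw [Finset.sum_Ico_eq_sum_range, Finset.sum_Ico_eq_sum_range]
        have : m - 1 - 1 = m - 2 := by omega
        rw [this]
        refine Finset.sum_congr rfl fun k _ => ?_
        congr 1
        push_cast
        ring
      have hval : (∫ t in ((1 : ℕ) : ℝ)..((m - 1 : ℕ) : ℝ), t ^ (-s)) ≤ 1 / (s - 1) := by
        rw [integral_rpow (Or.inr ⟨by linarith, by
          intro hmem
          rw [Set.uIcc_of_le (by exact_mod_cast hmm)] at hmem
          have := hmem.1
          norm_num at this⟩)]
        have hb : (0 : ℝ) ≤ ((m - 1 : ℕ) : ℝ) ^ (-s + 1) := by positivity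
        rw [Nat.cast_one, Real.one_rpow]
        rw [show (-s + 1) = -(s - 1) by ring]
        have hbb : (0 : ℝ) ≤ ((m - 1 : ℕ) : ℝ) ^ (-(s - 1)) := by positivity
        rw [div_neg, show -((((m - 1 : ℕ) : ℝ) ^ (-(s - 1)) - 1) / (s - 1)) =
          (1 - ((m - 1 : ℕ) : ℝ) ^ (-(s - 1))) / (s - 1) by ring]
        rw [div_le_div_iff₀ (by linarith) (by linarith)]
        nlinarith
      calc ∑ i ∈ Finset.Ico 2 m, ((i : ℝ)) ^ (-s)
          = ∑ i ∈ Finset.Ico 1 (m - 1), ((((i + 1) : ℕ) : ℝ)) ^ (-s) := hreindex.symm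
        _ ≤ ∫ t in ((1 : ℕ) : ℝ)..((m - 1 : ℕ) : ℝ), t ^ (-s) := hint
        _ ≤ 1 / (s - 1) := hval
    rw [hsplit, h01]
    linarith
  rcases le_or_gt n 2 with hn | hn
  · calc ∑ i ∈ Finset.range n, ((i : ℝ)) ^ (-s)
        ≤ ∑ i ∈ Finset.range 2, ((i : ℝ)) ^ (-s) := by
          refine Finset.sum_le_sum_of_subset_of_nonneg ?_ fun i _ _ => by positivity
          exact Finset.range_subset_range.mpr hn
      _ ≤ 1 + 1 / (s - 1) := key 2 le_rfl
  · exact key n hn.le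

lemma euler_le (hs : 1 < s) (N : ℕ) :
    ∏ p ∈ N.primesBelow, (1 - (p : ℝ) ^ (-s))⁻¹ ≤ 1 + 1 / (s - 1) := by
  have hlt : ∀ {p : ℕ}, p.Prime → ‖zfun s p‖ < 1 := by
    intro p hp
    rw [zfun_apply, Real.norm_eq_abs, abs_of_nonneg (r_pos hp.two_le).le]
    exact r_lt_one hp.two_le hs
  obtain ⟨hsum, hhas⟩ :=
    EulerProduct.summable_and_hasSum_smoothNumbers_prod_primesBelow_geometric hlt N
  have h1 : ∏ p ∈ N.primesBelow, (1 - (p : ℝ) ^ (-s))⁻¹ =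
      ∑' m : N.smoothNumbers, ((m : ℕ) : ℝ) ^ (-s) := hhas.tsum_eq.symm
  rw [h1]
  have h2 : ∑' m : N.smoothNumbers, ((m : ℕ) : ℝ) ^ (-s) ≤ ∑' n : ℕ, (n : ℝ) ^ (-s) := by
    refine Summable.tsum_le_tsum_of_inj (fun m : N.smoothNumbers => (m : ℕ)) Subtype.val_injective
      (fun c _ => by positivity) (fun i => le_refl _) ?_ (summable_zfun hs)
    exact hsum.of_norm
  refine h2.trans ?_
  exact Summable.tsum_le_of_sum_range_le (summable_zfun hs) (partial_zeta_le hs)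

/-- The weight function. -/
noncomputable def gf (s : ℝ) (P : Ideal (𝓞 K)) (e : ℕ) : ℝ :=
  (if e = 0 then (1 : ℝ) else 2) * ((Ideal.absNorm P : ℝ) ^ (-s)) ^ e

lemma f_eq (s : ℝ) {n : ℕ} {I : Ideal (𝓞 K)} (hI : I ≠ ⊥) (hIn : Ideal.absNorm I ≤ n) :
    (2 : ℝ) ^ omegaIdeal I * ((Ideal.absNorm I : ℝ)) ^ (-s) =
      ∏ P ∈ PF K n, gf s P (cnt I P) := by
  unfold gf
  rw [Finset.prod_mul_distrib]
  congr 1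
  · rw [Finset.prod_ite (fun _ => (1 : ℝ)) (fun _ => (2 : ℝ)), Finset.prod_const,
      Finset.prod_const, one_pow, one_mul, omega_eq hI hIn]
  · have h1 : ∀ P ∈ PF K n,
        (((Ideal.absNorm P : ℝ)) ^ (-s)) ^ cnt I P =
          ((((Ideal.absNorm P : ℝ)) ^ (cnt I P) : ℝ)) ^ (-s) := by
      intro P hP
      rw [← Real.rpow_natCast ((Ideal.absNorm P : ℝ) ^ (-s)) (cnt I P),
        ← Real.rpow_natCast ((Ideal.absNorm P : ℝ)) (cnt I P),
        ← Real.rpow_mul (by positivity), ← Real.rpow_mul (by positivity), mul_comm]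
    rw [Finset.prod_congr rfl h1,
      Real.finset_prod_rpow _ _ (fun P _ => by positivity) (-s)]
    congr 1
    rw [norm_prod hI hIn]
    push_cast
    ring

lemma mid_bound {n : ℕ} (hs : 1 < s) :
    ∑ I ∈ TF K n, (2 : ℝ) ^ omegaIdeal I * ((Ideal.absNorm I : ℝ)) ^ (-s) ≤
      (1 + 1 / (s - 1)) ^ (2 * dK K) := by
  calc ∑ I ∈ TF K n, (2 : ℝ) ^ omegaIdeal I * ((Ideal.absNorm I : ℝ)) ^ (-s)
      = ∑ I ∈ TF K n, ∏ P ∈ PF K n, gf s P (cnt I P) := by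
        refine Finset.sum_congr rfl fun I hI => ?_
        obtain ⟨hIb, hIn⟩ := mem_TF.mp hI
        exact f_eq s hIb hIn
    _ ≤ ∏ P ∈ PF K n, ∑ e ∈ Finset.range (n + 1), gf s P e := by
        refine sum_le_prod_sum n (gf s) (fun P => by simp [gf]) fun P e => ?_
        unfold gf
        rcases eq_or_ne e 0 with rfl | he
        · simp
        · simp only [he, if_false]
          positivity
    _ ≤ ∏ P ∈ PF K n, ((1 - (Ideal.absNorm P : ℝ) ^ (-s))⁻¹) ^ 2 := by
        refine Finset.prod_le_prod (fun P _ => Finset.sum_nonneg fun e _ => ?_) fun P hP => ?_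
        · unfold gf
          rcases eq_or_ne e 0 with rfl | he
          · simp
          · simp only [he, if_false]; positivity
        · exact sum_g_le (two_le_norm (mem_PF.mp hP).1) hs n
    _ ≤ ∏ p ∈ Nat.primesBelow (n + 1), (((1 - (p : ℝ) ^ (-s))⁻¹) ^ 2) ^ dK K :=
        prod_PF_le n hs
    _ = (∏ p ∈ Nat.primesBelow (n + 1), (1 - (p : ℝ) ^ (-s))⁻¹) ^ (2 * dK K) := by
        rw [← Finset.prod_pow]
        refine Finset.prod_congr rfl fun p _ => ?_
        rw [pow_mul]
    _ ≤ (1 + 1 / (s - 1)) ^ (2 * dK K) := by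
        refine pow_le_pow_left₀ (Finset.prod_nonneg fun p hp => ?_) (euler_le hs (n + 1)) _
        have hpp : p.Prime := (Nat.mem_primesBelow.mp hp).2
        have := r_lt_one (s := s) hpp.two_le hs
        exact inv_nonneg.mpr (by linarith)

lemma sum_two_pow_le (x : ℝ) (hx : 16 ≤ x) :
    ∑ I ∈ TF K ⌊x⌋₊, (2 : ℝ) ^ omegaIdeal I ≤
      Real.exp 1 * x * (2 * Real.log x) ^ (2 * dK K) := by
  have hx0 : (0 : ℝ) < x := by linarith
  set L := Real.log x with hL
  have hL1 : 1 ≤ L := by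
    rw [hL, Real.le_log_iff_exp_le hx0]
    have := Real.exp_one_lt_d9
    linarith
  set s : ℝ := 1 + 1 / L with hsdef
  have hs : 1 < s := by
    rw [hsdef]
    have : 0 < 1 / L := by positivity
    linarith
  set n := ⌊x⌋₊ with hn
  have hxs : x ^ s = Real.exp 1 * x := by
    rw [hsdef, Real.rpow_add hx0, Real.rpow_one, Real.rpow_def_of_pos hx0, ← hL,
      mul_one_div, div_self (by linarith : L ≠ 0), mul_comm]
  have hstep1 : ∑ I ∈ TF K n, (2 : ℝ) ^ omegaIdeal I ≤
      x ^ s * ∑ I ∈ TF K n, (2 : ℝ) ^ omegaIdeal I * ((Ideal.absNorm I : ℝ)) ^ (-s) := by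
    rw [Finset.mul_sum]
    refine Finset.sum_le_sum fun I hI => ?_
    obtain ⟨hIb, hIn⟩ := mem_TF.mp hI
    have hN1 : (1 : ℝ) ≤ (Ideal.absNorm I : ℝ) := by
      exact_mod_cast norm_pos hIb
    have hNx : ((Ideal.absNorm I : ℝ)) ≤ x :=
      le_trans (by exact_mod_cast hIn) (Nat.floor_le hx0.le)
    have hx_le : x ^ (-s) ≤ ((Ideal.absNorm I : ℝ)) ^ (-s) := by
      rw [Real.rpow_neg hx0.le, Real.rpow_neg (by linarith)]
      refine inv_anti₀ (Real.rpow_pos_of_pos (by linarith) _) ?_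
      exact Real.rpow_le_rpow (by linarith) hNx (by linarith)
    have hxx : x ^ s * x ^ (-s) = 1 := by
      rw [← Real.rpow_add hx0]
      simp
    have h2nn : (0 : ℝ) ≤ (2 : ℝ) ^ omegaIdeal I := by positivity
    have hxs0 : (0 : ℝ) ≤ x ^ s := (Real.rpow_pos_of_pos hx0 s).le
    calc (2 : ℝ) ^ omegaIdeal I = (2 : ℝ) ^ omegaIdeal I * (x ^ s * x ^ (-s)) := by
          rw [hxx, mul_one]
      _ ≤ (2 : ℝ) ^ omegaIdeal I * (x ^ s * ((Ideal.absNorm I : ℝ)) ^ (-s)) := by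
          refine mul_le_mul_of_nonneg_left ?_ h2nn
          exact mul_le_mul_of_nonneg_left hx_le hxs0
      _ = x ^ s * ((2 : ℝ) ^ omegaIdeal I * ((Ideal.absNorm I : ℝ)) ^ (-s)) := by ring
  have hmid := mid_bound (K := K) (n := n) hs
  have hsum0 : (0:ℝ) ≤ x ^ s := (Real.rpow_pos_of_pos hx0 s).le
  have hfinal : x ^ s * (1 + 1 / (s - 1)) ^ (2 * dK K) ≤
      Real.exp 1 * x * (2 * L) ^ (2 * dK K) := by
    rw [hxs]
    have h1 : 1 + 1 / (s - 1) = 1 + L := by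
      rw [hsdef]
      congr 1
      rw [add_sub_cancel_left, one_div_one_div]
    rw [h1]
    refine mul_le_mul_of_nonneg_left ?_ (by positivity)
    exact pow_le_pow_left₀ (by linarith) (by linarith) _
  calc ∑ I ∈ TF K n, (2 : ℝ) ^ omegaIdeal I
      ≤ x ^ s * ∑ I ∈ TF K n, (2 : ℝ) ^ omegaIdeal I * ((Ideal.absNorm I : ℝ)) ^ (-s) :=
        hstep1
    _ ≤ x ^ s * (1 + 1 / (s - 1)) ^ (2 * dK K) := mul_le_mul_of_nonneg_left hmid hsum0
    _ ≤ Real.exp 1 * x * (2 * L) ^ (2 * dK K) := hfinal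

lemma real_key (β : ℝ) (hβ : 0 < β) (A : ℕ) {L : ℝ} (hL : 1 ≤ L) :
    Real.exp 1 * (2 * L) ^ A * L ^ (2 * β) ≤
      (Real.exp 1 * 2 ^ A * Real.exp ((2 * ((A : ℝ) + 2 * β) / β) ^ 2 / 2)) *
        (2 : ℝ) ^ (L ^ β) := by
  have hL0 : (0 : ℝ) < L := by linarith
  set a : ℝ := 2 * ((A : ℝ) + 2 * β) / β with ha
  have ha0 : 0 ≤ a := by positivity
  set u : ℝ := L ^ (β / 2) with hu
  have hu1 : 1 ≤ u := by
    rw [hu]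
    calc (1 : ℝ) = (1 : ℝ) ^ (β / 2) := (Real.one_rpow _).symm
      _ ≤ L ^ (β / 2) := Real.rpow_le_rpow (by norm_num) hL (by positivity)
  have hu2 : u ^ (2 : ℕ) = L ^ β := by
    rw [hu, ← Real.rpow_natCast (L ^ (β / 2)) 2, ← Real.rpow_mul hL0.le]
    norm_num
  have hlogL : Real.log L ≤ (2 / β) * u := by
    have h1 : Real.log u = (β / 2) * Real.log L := Real.log_rpow hL0 _
    have h2 : Real.log u ≤ u := Real.log_le_self (by linarith)
    have hβ2 : 0 < β / 2 := by positivity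
    calc Real.log L = (2 / β) * ((β / 2) * Real.log L) := by field_simp
      _ = (2 / β) * Real.log u := by rw [h1]
      _ ≤ (2 / β) * u := by
          refine mul_le_mul_of_nonneg_left ?_ (by positivity)
          linarith
  have hlog2 : (1 : ℝ) / 2 ≤ Real.log 2 := by
    have := Real.log_two_gt_d9
    linarith
  have hlogL0 : 0 ≤ Real.log L := Real.log_nonneg hL
  -- rewrite powers as exponentials
  have hLA : (L : ℝ) ^ A = Real.exp (Real.log L * A) := by
    rw [← Real.rpow_natCast L A, Real.rpow_def_of_pos hL0]
  have hL2β : L ^ (2 * β) = Real.exp (Real.log L * (2 * β)) := Real.rpow_def_of_pos hL0 _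
  have h2L : (2 : ℝ) ^ (L ^ β) = Real.exp (Real.log 2 * L ^ β) :=
    Real.rpow_def_of_pos (by norm_num) _
  rw [mul_pow, hLA, hL2β, h2L]
  have hkey : Real.log L * A + Real.log L * (2 * β) ≤ a ^ 2 / 2 + Real.log 2 * L ^ β := by
    have hAnn : (0 : ℝ) ≤ (A : ℝ) + 2 * β := by positivity
    have h1 : Real.log L * A + Real.log L * (2 * β) = Real.log L * ((A : ℝ) + 2 * β) := by
      ring
    rw [h1]
    have h2 : Real.log L * ((A : ℝ) + 2 * β) ≤ ((2 / β) * u) * ((A : ℝ) + 2 * β) :=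
      mul_le_mul_of_nonneg_right hlogL hAnn
    have h3 : ((2 / β) * u) * ((A : ℝ) + 2 * β) = a * u := by
      rw [ha]; field_simp
    have h4 : a * u ≤ a ^ 2 / 2 + u ^ 2 / 2 := by nlinarith [sq_nonneg (u - a)]
    have h5 : u ^ 2 / 2 ≤ Real.log 2 * L ^ β := by
      rw [← hu2]
      have hu2nn : (0 : ℝ) ≤ u ^ 2 := by positivity
      nlinarith
    linarith
  calc Real.exp 1 * (2 ^ A * Real.exp (Real.log L * A)) * Real.exp (Real.log L * (2 * β))
      = Real.exp 1 * 2 ^ A * Real.exp (Real.log L * A + Real.log L * (2 * β)) := by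
        rw [Real.exp_add]; ring
    _ ≤ Real.exp 1 * 2 ^ A * Real.exp (a ^ 2 / 2 + Real.log 2 * L ^ β) := by
        refine mul_le_mul_of_nonneg_left ?_ (by positivity)
        exact Real.exp_le_exp.mpr hkey
    _ = Real.exp 1 * 2 ^ A * Real.exp (a ^ 2 / 2) * Real.exp (Real.log 2 * L ^ β) := by
        rw [Real.exp_add]; ring

end Analytic

end Stmt7Aux

theorem stmt_7 (K : Type*) [Field K] [NumberField K] (β : ℝ) (hβ : 0 < β) :
    ∃ C : ℝ, 0 < C ∧ ∀ x : ℝ, 16 ≤ x →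
      ({I : Ideal (𝓞 K) | I ≠ ⊥ ∧ (Ideal.absNorm I : ℝ) ≤ x ∧
          (Real.log x) ^ β ≤ (omegaIdeal I : ℝ)}.ncard : ℝ)
        ≤ C * x * (Real.log (Real.log x)) ^ 2 / (Real.log x) ^ (2 * β) := by
  classical
  set A : ℕ := 2 * Stmt7Aux.dK K with hA
  set C : ℝ := Real.exp 1 * 2 ^ A * Real.exp ((2 * ((A : ℝ) + 2 * β) / β) ^ 2 / 2) with hC
  refine ⟨C, by positivity, fun x hx => ?_⟩
  have hx0 : (0 : ℝ) < x := by linarith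
  set L := Real.log x with hL
  have hlog16 : Real.log 16 = 4 * Real.log 2 := by
    rw [show (16 : ℝ) = 2 ^ (4 : ℕ) by norm_num, Real.log_pow]
    push_cast; ring
  have hL16 : Real.log 16 ≤ L := Real.log_le_log (by norm_num) hx
  have heL : Real.exp 1 ≤ L := by
    have h2 := Real.log_two_gt_d9
    have h3 := Real.exp_one_lt_d9
    rw [hlog16] at hL16
    linarith
  have hL1 : (1 : ℝ) ≤ L := by
    have := Real.exp_one_gt_d9
    linarith
  have hL0 : (0 : ℝ) < L := by linarith
  have hloglog : (1 : ℝ) ≤ Real.log L := by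
    rw [Real.le_log_iff_exp_le hL0]; exact heL
  set S := {I : Ideal (𝓞 K) | I ≠ ⊥ ∧ (Ideal.absNorm I : ℝ) ≤ x ∧
      L ^ β ≤ (omegaIdeal I : ℝ)} with hS
  set n := ⌊x⌋₊ with hn
  have hSsub : S ⊆ {I : Ideal (𝓞 K) | I ≠ ⊥ ∧ Ideal.absNorm I ≤ n} := by
    intro I hI
    exact ⟨hI.1, Nat.le_floor hI.2.1⟩
  have hSfin : S.Finite := (Stmt7Aux.finT K n).subset hSsub
  have hsub2 : hSfin.toFinset ⊆ Stmt7Aux.TF K n := by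
    intro I hI
    rw [Set.Finite.mem_toFinset] at hI
    exact (Set.Finite.mem_toFinset _).mpr (hSsub hI)
  have hncard : (S.ncard : ℕ) = hSfin.toFinset.card := by
    rw [← Set.ncard_coe_finset hSfin.toFinset, hSfin.coe_toFinset]
  have hcard : (S.ncard : ℝ) * (2 : ℝ) ^ (L ^ β) ≤
      ∑ I ∈ Stmt7Aux.TF K n, (2 : ℝ) ^ omegaIdeal I := by
    calc (S.ncard : ℝ) * (2 : ℝ) ^ (L ^ β)
        = ∑ _I ∈ hSfin.toFinset, (2 : ℝ) ^ (L ^ β) := by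
          rw [Finset.sum_const, nsmul_eq_mul, hncard]
      _ ≤ ∑ I ∈ hSfin.toFinset, (2 : ℝ) ^ omegaIdeal I := by
          refine Finset.sum_le_sum fun I hI => ?_
          rw [Set.Finite.mem_toFinset] at hI
          have hω : L ^ β ≤ (omegaIdeal I : ℝ) := hI.2.2
          calc (2 : ℝ) ^ (L ^ β) ≤ (2 : ℝ) ^ ((omegaIdeal I : ℕ) : ℝ) :=
              Real.rpow_le_rpow_of_exponent_le one_le_two hω
            _ = (2 : ℝ) ^ omegaIdeal I := Real.rpow_natCast 2 _
      _ ≤ ∑ I ∈ Stmt7Aux.TF K n, (2 : ℝ) ^ omegaIdeal I :=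
          Finset.sum_le_sum_of_subset_of_nonneg hsub2 fun I _ _ => by positivity
  have hmain := Stmt7Aux.sum_two_pow_le (K := K) x hx
  rw [← hL, ← hn, ← hA] at hmain
  have hrk := Stmt7Aux.real_key β hβ A hL1
  rw [← hC] at hrk
  have h2pos : (0 : ℝ) < (2 : ℝ) ^ (L ^ β) := Real.rpow_pos_of_pos two_pos _
  have hL2β : (0 : ℝ) < L ^ (2 * β) := Real.rpow_pos_of_pos hL0 _
  have hfin1 : (S.ncard : ℝ) * L ^ (2 * β) ≤ C * x := by
    have hmul : ((S.ncard : ℝ) * L ^ (2 * β)) * (2 : ℝ) ^ (L ^ β) ≤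
        (C * x) * (2 : ℝ) ^ (L ^ β) := by
      calc ((S.ncard : ℝ) * L ^ (2 * β)) * (2 : ℝ) ^ (L ^ β)
          = ((S.ncard : ℝ) * (2 : ℝ) ^ (L ^ β)) * L ^ (2 * β) := by ring
        _ ≤ (Real.exp 1 * x * (2 * L) ^ A) * L ^ (2 * β) :=
            mul_le_mul_of_nonneg_right (hcard.trans hmain) hL2β.le
        _ = x * (Real.exp 1 * (2 * L) ^ A * L ^ (2 * β)) := by ring
        _ ≤ x * (C * (2 : ℝ) ^ (L ^ β)) := mul_le_mul_of_nonneg_left hrk hx0.le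
        _ = (C * x) * (2 : ℝ) ^ (L ^ β) := by ring
    exact le_of_mul_le_mul_right hmul h2pos
  have hCx : (0 : ℝ) ≤ C * x := by positivity
  calc (S.ncard : ℝ) ≤ C * x / L ^ (2 * β) := by
        rw [le_div_iff₀ hL2β]; exact hfin1
    _ ≤ C * x * (Real.log L) ^ 2 / L ^ (2 * β) := by
        rw [div_le_div_iff₀ hL2β hL2β]
        have h9 : 0 ≤ (Real.log L ^ 2 - 1) * (C * x * L ^ (2 * β)) :=
          mul_nonneg (by nlinarith) (by positivity)
        nlinarith [h9]
end

section
/- Let K be a number field with ring of integers O_K, and let a be a unit of O_K of infinite order (i.e. a^k ≠ 1 for all positive integers k). Then there exists a real constant C > 1 such that for every nonzero ideal I of O_K, N(I) ≤ C^(o_a(I)), where o_a(I) denotes the multiplicative order of the image of a in the unit group (O_K/I)ˣ. Equivalently, o_a(I) ≥ log N(I) / log C. -/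
open NumberField

set_option maxHeartbeats 1000000 in
set_option synthInstance.maxHeartbeats 400000 in
theorem stmt_13 (K : Type*) [Field K] [NumberField K] (a : (𝓞 K)ˣ)
    (ha : ∀ k : ℕ, 0 < k → a ^ k ≠ 1) :
    ∃ C : ℝ, 1 < C ∧ ∀ I : Ideal (𝓞 K), I ≠ ⊥ →
      (Ideal.absNorm I : ℝ) ≤
        C ^ (orderOf (Units.map (Ideal.Quotient.mk I).toMonoidHom a)) := by
  classical
  have hne : Nonempty (K →+* ℂ) := inferInstance
  set f : (K →+* ℂ) → ℝ := fun φ => ‖φ ((a : 𝓞 K) : K)‖ with hf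
  set M : ℝ := Finset.univ.sup' (Finset.univ_nonempty) f with hMdef
  have hM0 : 0 ≤ M := by
    obtain ⟨φ⟩ := hne
    exact le_trans (norm_nonneg _) (Finset.le_sup' f (Finset.mem_univ φ))
  set d : ℕ := Fintype.card (K →+* ℂ) with hddef
  have hd : 0 < d := Fintype.card_pos
  refine ⟨(2 * (M + 1)) ^ d, one_lt_pow₀ (by linarith) hd.ne', ?_⟩
  intro I hI
  haveI : Fintype ((𝓞 K) ⧸ I) := @Fintype.ofFinite _ (Ideal.finiteQuotientOfFreeOfNeBot I hI)
  haveI : Finite (((𝓞 K) ⧸ I))ˣ := inferInstance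
  set n : ℕ := orderOf (Units.map (Ideal.Quotient.mk I).toMonoidHom a) with hn
  have hnpos : 0 < n := orderOf_pos _
  set x : 𝓞 K := (a : 𝓞 K) ^ n - 1 with hx
  have h2q : (Ideal.Quotient.mk I) ((a : 𝓞 K) ^ n) = 1 := by
    have h1 : (Units.map (Ideal.Quotient.mk I).toMonoidHom a) ^ n = 1 := pow_orderOf_eq_one _
    have := congrArg Units.val h1
    simpa [Units.coe_map] using this
  have hmem : x ∈ I := by
    have : (Ideal.Quotient.mk I) x = 0 := by
      rw [hx, map_sub, map_one, h2q, sub_self]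
    exact (Ideal.Quotient.eq_zero_iff_mem).mp this
  have hxne : x ≠ 0 := by
    intro h
    exact ha n hnpos (Units.ext (by
      rw [Units.val_pow_eq_pow_val, Units.val_one]
      exact sub_eq_zero.mp (hx ▸ h)))
  have hKne : (algebraMap (𝓞 K) K) x ≠ 0 := by
    simpa using hxne
  have hnormne : Algebra.norm ℚ ((x : 𝓞 K) : K) ≠ 0 := by
    rw [Algebra.norm_ne_zero_iff]
    exact hKne
  have hznorm : Algebra.norm ℤ x ≠ 0 := by
    intro h
    apply hnormne
    rw [← Algebra.coe_norm_int, h]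
    simp
  have hdvd : (Ideal.absNorm I : ℤ) ∣ Algebra.norm ℤ x := Ideal.absNorm_dvd_norm_of_mem hmem
  have h1 : (Ideal.absNorm I : ℝ) ≤ |((Algebra.norm ℤ x : ℤ) : ℝ)| := by
    have := Int.le_of_dvd (abs_pos.mpr hznorm) ((dvd_abs _ _).mpr hdvd)
    calc (Ideal.absNorm I : ℝ) ≤ ((|Algebra.norm ℤ x| : ℤ) : ℝ) := by exact_mod_cast this
      _ = |((Algebra.norm ℤ x : ℤ) : ℝ)| := by push_cast; ring
  have h2 : |((Algebra.norm ℤ x : ℤ) : ℝ)| = ∏ φ : K →+* ℂ, ‖φ ((x : 𝓞 K) : K)‖ := by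
    have h := congrArg (‖·‖) (Algebra.norm_eq_prod_embeddings ℚ ℂ ((x : 𝓞 K) : K))
    rw [norm_prod] at h
    rw [Fintype.prod_equiv (RingHom.equivRatAlgHom K ℂ)
      (fun φ : K →+* ℂ => ‖φ ((x : 𝓞 K) : K)‖)
      (fun σ : K →ₐ[ℚ] ℂ => ‖σ ((x : 𝓞 K) : K)‖)
      (fun φ => by simp [RingHom.equivRatAlgHom_apply])]
    rw [← h, ← Algebra.coe_norm_int, eq_ratCast]
    norm_cast
  have h3 : ∀ φ : K →+* ℂ, ‖φ ((x : 𝓞 K) : K)‖ ≤ (2 * (M + 1)) ^ n := by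
    intro φ
    have hφa : ‖φ ((a : 𝓞 K) : K)‖ ≤ M := Finset.le_sup' f (Finset.mem_univ φ)
    have hstep : ‖φ ((x : 𝓞 K) : K)‖ ≤ ‖φ ((a : 𝓞 K) : K)‖ ^ n + 1 := by
      have hrw : (φ ((x : 𝓞 K) : K)) = (φ ((a : 𝓞 K) : K)) ^ n - 1 := by
        rw [hx]; push_cast; rw [map_sub, map_pow, map_one]
      rw [hrw]
      calc ‖(φ ((a : 𝓞 K) : K)) ^ n - 1‖
          ≤ ‖(φ ((a : 𝓞 K) : K)) ^ n‖ + ‖(1 : ℂ)‖ :=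
            norm_sub_le _ _
        _ = ‖φ ((a : 𝓞 K) : K)‖ ^ n + 1 := by rw [norm_pow, norm_one]
    refine hstep.trans ?_
    have hMn : ‖φ ((a : 𝓞 K) : K)‖ ^ n ≤ (M + 1) ^ n :=
      pow_le_pow_left₀ (norm_nonneg _) (by linarith) n
    have h1n : (1 : ℝ) ≤ (M + 1) ^ n := one_le_pow₀ (by linarith)
    calc ‖φ ((a : 𝓞 K) : K)‖ ^ n + 1 ≤ (M + 1) ^ n + (M + 1) ^ n := by linarith
      _ = 2 * (M + 1) ^ n := by ring
      _ ≤ 2 ^ n * (M + 1) ^ n := by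
          have h2n : (2 : ℝ) ≤ 2 ^ n := by
            calc (2:ℝ) = 2 ^ 1 := (pow_one 2).symm
              _ ≤ 2 ^ n := pow_le_pow_right₀ one_le_two hnpos
          nlinarith [pow_nonneg (by linarith : (0:ℝ) ≤ M + 1) n]
      _ = (2 * (M + 1)) ^ n := (mul_pow _ _ _).symm
  have h4 : (∏ φ : K →+* ℂ, ‖φ ((x : 𝓞 K) : K)‖) ≤ ((2 * (M + 1)) ^ n) ^ d := by
    calc (∏ φ : K →+* ℂ, ‖φ ((x : 𝓞 K) : K)‖)
        ≤ ∏ _φ : K →+* ℂ, (2 * (M + 1)) ^ n :=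
          Finset.prod_le_prod (fun φ _ => norm_nonneg _) (fun φ _ => h3 φ)
      _ = ((2 * (M + 1)) ^ n) ^ d := by rw [Finset.prod_const, Finset.card_univ]
  calc (Ideal.absNorm I : ℝ) ≤ ((2 * (M + 1)) ^ n) ^ d := by
        rw [h2] at h1; exact h1.trans h4
    _ = ((2 * (M + 1)) ^ d) ^ n := by rw [← pow_mul, ← pow_mul, Nat.mul_comm]
end

section
/- Let K be a number field with ring of integers O_K whose unit group U_K = (O_K)ˣ has positive rank, i.e. U_K contains an element of infinite order. Then there exists a real constant c > 1 such that for every nonzero ideal I of O_K, N(I) ≤ c^([U_K : U_K(I)]), where U_K(I) is the subgroup of U_K consisting of units congruent to 1 modulo I. Equivalently, [U_K : U_K(I)] ≥ log N(I) / log c. -/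
set_option maxHeartbeats 1000000
set_option synthInstance.maxHeartbeats 400000

open NumberField

theorem stmt_14 (K : Type*) [Field K] [NumberField K]
    (hrank : ∃ u : (𝓞 K)ˣ, ∀ k : ℕ, 0 < k → u ^ k ≠ 1) :
    ∃ c : ℝ, 1 < c ∧ ∀ I : Ideal (𝓞 K), I ≠ ⊥ →
      (Ideal.absNorm I : ℝ) ≤
        c ^ ((Units.map (Ideal.Quotient.mk I).toMonoidHom).ker.index) := by
  obtain ⟨u, hu⟩ := hrank
  set x : K := algebraMap (𝓞 K) K (u : 𝓞 K) with hx
  have hx0 : x ≠ 0 := by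
    rw [hx]
    exact (map_ne_zero_iff _ (FaithfulSMul.algebraMap_injective (𝓞 K) K)).mpr u.ne_zero
  refine ⟨∏ w : InfinitePlace K, (w x + 1) ^ w.mult, ?_, ?_⟩
  · have h0 : (1 : ℝ) = ∏ _w : InfinitePlace K, 1 := by simp
    nth_rewrite 1 [h0]
    refine Finset.prod_lt_prod_of_nonempty (fun w _ => one_pos) (fun w _ => ?_)
      Finset.univ_nonempty
    have h1 : 1 < w x + 1 := by
      have := (NumberField.InfinitePlace.pos_iff (w := w)).mpr hx0
      linarith
    exact one_lt_pow₀ h1 NumberField.InfinitePlace.mult_ne_zero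
  · intro I hI
    haveI : Fintype (𝓞 K ⧸ I) := @Fintype.ofFinite _ (Ideal.finiteQuotientOfFreeOfNeBot I hI)
    set f := Units.map (Ideal.Quotient.mk I).toMonoidHom with hf
    set n := f.ker.index with hn
    have hn0 : n ≠ 0 := by
      rw [hn, Subgroup.index_ker]
      exact Nat.card_pos.ne'
    haveI : f.ker.FiniteIndex := ⟨hn0⟩
    have hmem : u ^ n ∈ f.ker := Subgroup.pow_index_mem f.ker u
    have hmem' : ((u : 𝓞 K) ^ n - 1) ∈ I := by
      rw [MonoidHom.mem_ker] at hmem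
      have := congrArg Units.val hmem
      simp only [hf, Units.coe_map, Units.val_pow_eq_pow_val, Units.val_one,
        RingHom.toMonoidHom_eq_coe, MonoidHom.coe_coe] at this
      rwa [← Ideal.Quotient.eq_zero_iff_mem, map_sub, map_pow, map_one, sub_eq_zero]
    set y : 𝓞 K := (u : 𝓞 K) ^ n - 1 with hy
    have hy0 : y ≠ 0 := by
      intro h
      apply hu n (Nat.pos_of_ne_zero hn0)
      have h2 : (u : 𝓞 K) ^ n = 1 := by rwa [hy, sub_eq_zero] at h
      exact Units.ext (by simpa using h2)
    have hdvd : Ideal.absNorm I ∣ Ideal.absNorm (Ideal.span {y}) :=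
      Ideal.absNorm_dvd_absNorm_of_le ((Ideal.span_singleton_le_iff_mem _).mpr hmem')
    have hsn : Ideal.absNorm (Ideal.span {y}) ≠ 0 := by
      rw [ne_eq, Ideal.absNorm_eq_zero_iff, Ideal.span_singleton_eq_bot]
      exact hy0
    have h1 : Ideal.absNorm I ≤ Ideal.absNorm (Ideal.span {y}) :=
      Nat.le_of_dvd (Nat.pos_of_ne_zero hsn) hdvd
    have h2 : (Ideal.absNorm (Ideal.span {y}) : ℝ) =
        ∏ w : InfinitePlace K, (w (algebraMap (𝓞 K) K y)) ^ w.mult := by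
      rw [Ideal.absNorm_span_singleton, InfinitePlace.prod_eq_abs_norm,
        show algebraMap (𝓞 K) K y = (y : K) from rfl, ← Algebra.coe_norm_int]
      push_cast [Nat.cast_natAbs]
      ring
    calc (Ideal.absNorm I : ℝ) ≤ (Ideal.absNorm (Ideal.span {y}) : ℝ) := by exact_mod_cast h1
      _ = ∏ w : InfinitePlace K, (w (algebraMap (𝓞 K) K y)) ^ w.mult := h2
      _ ≤ ∏ w : InfinitePlace K, ((w x + 1) ^ w.mult) ^ n := by
          refine Finset.prod_le_prod (fun w _ => pow_nonneg (apply_nonneg w _) _)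
            (fun w _ => ?_)
          rw [← pow_mul, mul_comm w.mult n, pow_mul]
          refine pow_le_pow_left₀ (apply_nonneg w _) ?_ _
          have heq : algebraMap (𝓞 K) K y = x ^ n - 1 := by
            rw [hy, map_sub, map_pow, map_one, hx]
          rw [heq]
          calc w (x ^ n - 1) ≤ w (x ^ n) + 1 := by
                simpa [sub_eq_add_neg, InfinitePlace.coe_apply] using w.1.add_le (x ^ n) (-1)
            _ = (w x) ^ n + 1 ^ n := by rw [map_pow, one_pow]
            _ ≤ (w x + 1) ^ n := pow_add_pow_le (apply_nonneg w x) zero_le_one hn0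
      _ = (∏ w : InfinitePlace K, (w x + 1) ^ w.mult) ^ n := by
          rw [← Finset.prod_pow]
end

section
/- Let K be a number field with ring of integers O_K. There exists a real constant k > 0 such that for all but finitely many nonzero ideals I of O_K (equivalently, the set of nonzero ideals violating the inequality is finite), one has ω(I) < k · log N(I) / log log N(I). -/
open NumberField

section Helpers
open Ideal
variable {K : Type*} [Field K] [NumberField K]

lemma primes_finite {I : Ideal (𝓞 K)} (hI : I ≠ ⊥) :
    {P : Ideal (𝓞 K) | P.IsPrime ∧ P ∣ I}.Finite := by
  have h := Ideal.finite_factors (R := 𝓞 K) hI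
  refine (h.image (fun v => v.asIdeal)).subset ?_
  rintro P ⟨hP, hPI⟩
  have hPbot : P ≠ ⊥ := by
    rintro rfl
    exact hI (le_bot_iff.mp (Ideal.le_of_dvd hPI))
  exact ⟨⟨P, hP, hPbot⟩, hPI, rfl⟩

lemma mem_primesT {I : Ideal (𝓞 K)} (hI : I ≠ ⊥) {P : Ideal (𝓞 K)} :
    P ∈ (primes_finite hI).toFinset ↔ P.IsPrime ∧ P ∣ I := by
  simp [Set.Finite.mem_toFinset]

lemma primes_ne_bot {I : Ideal (𝓞 K)} (hI : I ≠ ⊥) {P : Ideal (𝓞 K)}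
    (hP : P ∈ (primes_finite hI).toFinset) : P ≠ ⊥ := by
  rintro rfl
  exact hI (le_bot_iff.mp (Ideal.le_of_dvd ((mem_primesT hI).mp hP).2))

lemma two_le_absNorm {P : Ideal (𝓞 K)} (hP : P.IsPrime) (hbot : P ≠ ⊥) :
    2 ≤ absNorm P := by
  have h0 : absNorm P ≠ 0 := by simpa [Ideal.absNorm_eq_zero_iff] using hbot
  have h1 : absNorm P ≠ 1 := by
    simpa [Ideal.absNorm_eq_one_iff] using hP.ne_top
  omega

lemma prod_primes_le {I : Ideal (𝓞 K)} (hI : I ≠ ⊥) :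
    ∏ P ∈ (primes_finite hI).toFinset, absNorm P ≤ absNorm I := by
  have hdvd : (∏ P ∈ (primes_finite hI).toFinset, P) ∣ I := by
    apply Finset.prod_primes_dvd
    · intro P hP
      exact Ideal.prime_of_isPrime (primes_ne_bot hI hP) ((mem_primesT hI).mp hP).1
    · intro P hP
      exact ((mem_primesT hI).mp hP).2
  have h2 := Ideal.absNorm_dvd_absNorm_of_le (Ideal.le_of_dvd hdvd)
  rw [map_prod] at h2
  exact Nat.le_of_dvd (Nat.pos_of_ne_zero
    (by simpa [Ideal.absNorm_eq_zero_iff] using hI)) h2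

lemma pow_card_le {J : Ideal (𝓞 K)} (hJ : J ≠ ⊥) :
    2 ^ (primes_finite hJ).toFinset.card ≤ absNorm J := by
  calc 2 ^ (primes_finite hJ).toFinset.card
      = ∏ _P ∈ (primes_finite hJ).toFinset, 2 := by
        rw [Finset.prod_const]
    _ ≤ ∏ P ∈ (primes_finite hJ).toFinset, absNorm P := by
        apply Finset.prod_le_prod'
        intro P hP
        exact two_le_absNorm ((mem_primesT hJ).mp hP).1 (primes_ne_bot hJ hP)
    _ ≤ absNorm J := prod_primes_le hJ

lemma small_prime_dvd {P : Ideal (𝓞 K)} (hP : P.IsPrime) (hbot : P ≠ ⊥) {t : ℕ}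
    (h : absNorm P ≤ t) : P ∣ Ideal.span {(Nat.factorial t : 𝓞 K)} := by
  have h1 : absNorm P ∣ Nat.factorial t :=
    Nat.dvd_factorial (Nat.pos_of_ne_zero (by simpa [Ideal.absNorm_eq_zero_iff] using hbot)) h
  obtain ⟨c, hc⟩ := h1
  have hmem : ((Nat.factorial t : ℕ) : 𝓞 K) ∈ P := by
    rw [hc]
    push_cast
    exact Ideal.mul_mem_right _ _ (Ideal.absNorm_mem P)
  rw [Ideal.dvd_iff_le, Ideal.span_singleton_le_iff_mem]
  exact hmem

lemma factorial_span_norm (t : ℕ) :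
    absNorm (Ideal.span {(Nat.factorial t : 𝓞 K)}) = (Nat.factorial t) ^ (Module.finrank ℤ (𝓞 K)) := by
  rw [Ideal.absNorm_span_singleton]
  have h1 : ((Nat.factorial t : ℕ) : 𝓞 K) = algebraMap ℤ (𝓞 K) ((Nat.factorial t : ℕ) : ℤ) := by
    rw [map_natCast]
  rw [h1, Algebra.norm_algebraMap_of_basis (RingOfIntegers.basis K),
    Module.finrank_eq_card_chooseBasisIndex ℤ (𝓞 K)]
  simp [Int.natAbs_pow]

lemma aux1 (u : ℝ) (hu : 100 ≤ u) : 3 * u ^ 2 ≤ Real.exp u := by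
  have h := Real.add_one_le_exp (u / 3)
  have he : Real.exp u = Real.exp (u / 3) ^ 3 := by
    rw [← Real.exp_nat_mul]
    push_cast
    ring_nf
  rw [he]
  have hcube : (u / 3 + 1) ^ 3 ≤ Real.exp (u / 3) ^ 3 :=
    pow_le_pow_left₀ (by positivity) (by linarith) 3
  nlinarith [mul_nonneg (sub_nonneg.mpr hu) (sq_nonneg u), sq_nonneg u]

lemma aux2 (u : ℝ) (hu : 100 ≤ u) : Real.log u ≤ u / 4 := by
  have h0 : (0 : ℝ) < u := by linarith
  have hs : Real.log u = 2 * Real.log (Real.sqrt u) := by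
    rw [Real.log_sqrt h0.le]; ring
  have h1 : Real.log (Real.sqrt u) ≤ Real.sqrt u - 1 :=
    Real.log_le_sub_one_of_pos (Real.sqrt_pos.mpr h0)
  have h2 : Real.sqrt u ^ 2 = u := Real.sq_sqrt h0.le
  have h3 : 0 ≤ Real.sqrt u := Real.sqrt_nonneg u
  nlinarith [sq_nonneg (Real.sqrt u - 10)]

set_option maxHeartbeats 1000000 in
lemma main_bound {I : Ideal (𝓞 K)} (hI : I ≠ ⊥)
    (hN : Real.exp (Real.exp 100) ≤ (absNorm I : ℝ)) :
    (omegaIdeal I : ℝ) < (4 * (Module.finrank ℤ (𝓞 K)) / Real.log 2 + 3) *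
      Real.log (absNorm I) / Real.log (Real.log (absNorm I)) := by
  classical
  set n := Module.finrank ℤ (𝓞 K) with hn
  set N : ℝ := (absNorm I : ℝ) with hNdef
  have hN0 : 0 < N := lt_of_lt_of_le (Real.exp_pos _) hN
  set L := Real.log N with hLdef
  have hLlb : Real.exp 100 ≤ L := by
    have := Real.log_le_log (Real.exp_pos _) hN
    rwa [Real.log_exp, ← hLdef] at this
  have hL0 : (0 : ℝ) < L := lt_of_lt_of_le (Real.exp_pos _) hLlb
  set u := Real.log L with hudef
  have hulb : (100 : ℝ) ≤ u := by
    have := Real.log_le_log (Real.exp_pos _) hLlb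
    rwa [Real.log_exp, ← hudef] at this
  have hu0 : (0 : ℝ) < u := by linarith
  have hLu : L = Real.exp u := (Real.exp_log hL0).symm
  have h3u : 3 * u ^ 2 ≤ L := by rw [hLu]; exact aux1 u hulb
  -- the threshold
  set t : ℕ := ⌈L / u ^ 2⌉₊ + 2 with htdef
  have ht_lb : L / u ^ 2 ≤ (t : ℝ) := by
    have h := Nat.le_ceil (L / u ^ 2)
    have h2 : ((⌈L / u ^ 2⌉₊ : ℕ) : ℝ) ≤ (t : ℝ) := by
      rw [htdef]; push_cast; linarith
    linarith
  have h3' : (3 : ℝ) ≤ L / u ^ 2 := (le_div_iff₀ (by positivity)).mpr (by linarith)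
  have ht_ub : (t : ℝ) * u ^ 2 ≤ 2 * L := by
    have h1 : (⌈L / u ^ 2⌉₊ : ℝ) < L / u ^ 2 + 1 := Nat.ceil_lt_add_one (by positivity)
    have h2 : (t : ℝ) ≤ 2 * (L / u ^ 2) := by rw [htdef]; push_cast; linarith
    calc (t : ℝ) * u ^ 2 ≤ 2 * (L / u ^ 2) * u ^ 2 :=
          mul_le_mul_of_nonneg_right h2 (by positivity)
      _ = 2 * L := by field_simp
  have ht2 : 2 ≤ t := by rw [htdef]; omega
  have ht0 : (0 : ℝ) < (t : ℝ) := by exact_mod_cast Nat.lt_of_lt_of_le (by norm_num) ht2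
  have huu : (10000 : ℝ) ≤ u ^ 2 := by nlinarith
  have htL : (t : ℝ) ≤ L := by
    linarith [mul_le_mul_of_nonneg_left huu ht0.le, ht_ub, hL0]
  have hlogt_ub : Real.log t ≤ u := by
    have := Real.log_le_log ht0 htL
    rwa [← hudef] at this
  have hlogt_lb : u / 2 ≤ Real.log t := by
    have h1 : Real.log (L / u ^ 2) ≤ Real.log t :=
      Real.log_le_log (by positivity) ht_lb
    rw [Real.log_div (ne_of_gt hL0) (by positivity), Real.log_pow, ← hudef] at h1
    have h2 : Real.log u ≤ u / 4 := aux2 u hulb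
    have h3 : ((2 : ℕ) : ℝ) = (2 : ℝ) := by norm_num
    rw [h3] at h1
    linarith
  have hlogt0 : (0 : ℝ) < Real.log t := by linarith
  -- the finsets
  set T := (primes_finite hI).toFinset with hT
  set a := (T.filter (fun P => absNorm P ≤ t)).card with ha
  set b := (T.filter (fun P => ¬ absNorm P ≤ t)).card with hb
  have hab : a + b = omegaIdeal I := by
    rw [ha, hb, Finset.card_filter_add_card_filter_not, hT]
    simp only [omegaIdeal]
    exact (Set.ncard_eq_toFinset_card _ (primes_finite hI)).symm
  -- bound on a
  have hJbot : Ideal.span {(Nat.factorial t : 𝓞 K)} ≠ ⊥ := by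
    rw [ne_eq, Ideal.span_singleton_eq_bot]
    exact_mod_cast (Nat.factorial_ne_zero t)
  have hsub : T.filter (fun P => absNorm P ≤ t) ⊆ (primes_finite hJbot).toFinset := by
    intro P hP
    rw [Finset.mem_filter] at hP
    obtain ⟨hPT, hPle⟩ := hP
    rw [hT, Set.Finite.mem_toFinset] at hPT
    rw [mem_primesT hJbot]
    exact ⟨hPT.1, small_prime_dvd hPT.1 (by rintro rfl; exact hI (le_bot_iff.mp
      (Ideal.le_of_dvd hPT.2))) hPle⟩
  have hA : 2 ^ a ≤ t ^ (t * n) := by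
    calc 2 ^ a ≤ 2 ^ (primes_finite hJbot).toFinset.card :=
          Nat.pow_le_pow_right (by norm_num) (Finset.card_le_card hsub)
      _ ≤ absNorm (Ideal.span {(Nat.factorial t : 𝓞 K)}) := pow_card_le hJbot
      _ = (Nat.factorial t) ^ n := factorial_span_norm t
      _ ≤ (t ^ t) ^ n := Nat.pow_le_pow_left (Nat.factorial_le_pow t) n
      _ = t ^ (t * n) := by rw [← pow_mul]
  have hAR : (a : ℝ) * Real.log 2 ≤ (n : ℝ) * ((t : ℝ) * Real.log t) := by
    have hcast : ((2 : ℝ)) ^ a ≤ ((t : ℝ)) ^ (t * n) := by exact_mod_cast hA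
    have h1 := Real.log_le_log (by positivity) hcast
    rw [Real.log_pow, Real.log_pow, Nat.cast_mul] at h1
    linarith [h1]
  -- bound on b
  have hB : t ^ b ≤ absNorm I := by
    calc t ^ b ≤ (t + 1) ^ b := Nat.pow_le_pow_left (Nat.le_succ t) b
      _ = ∏ _P ∈ T.filter (fun P => ¬ absNorm P ≤ t), (t + 1) := by
          rw [Finset.prod_const, hb]
      _ ≤ ∏ P ∈ T.filter (fun P => ¬ absNorm P ≤ t), absNorm P := by
          apply Finset.prod_le_prod'
          intro P hP
          have := (Finset.mem_filter.mp hP).2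
          omega
      _ ≤ ∏ P ∈ T, absNorm P := by
          apply Finset.prod_le_prod_of_subset_of_one_le' (Finset.filter_subset _ _)
          intro P hPT _
          have hPT' := hPT
          rw [hT, Set.Finite.mem_toFinset] at hPT'
          have := two_le_absNorm hPT'.1 (by rintro rfl; exact hI (le_bot_iff.mp
            (Ideal.le_of_dvd hPT'.2)))
          omega
      _ ≤ absNorm I := by rw [hT]; exact prod_primes_le hI
  have hBR : (b : ℝ) * Real.log t ≤ L := by
    have hcast : ((t : ℝ)) ^ b ≤ N := by rw [hNdef]; exact_mod_cast hB
    have h1 := Real.log_le_log (by positivity) hcast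
    rw [Real.log_pow, ← hLdef] at h1
    exact h1
  -- combine
  have hlog2 : (0 : ℝ) < Real.log 2 := Real.log_pos (by norm_num)
  have hnt0 : (0 : ℝ) ≤ (n : ℝ) * t := by positivity
  have h1 : (a : ℝ) * Real.log 2 ≤ (n : ℝ) * t * u := by
    have h := mul_le_mul_of_nonneg_left hlogt_ub hnt0
    linarith [hAR, h]
  have hau : (a : ℝ) * Real.log 2 * u ≤ 2 * n * L := by
    have h2 := mul_le_mul_of_nonneg_right h1 hu0.le
    have h3 := mul_le_mul_of_nonneg_left ht_ub (show (0 : ℝ) ≤ (n : ℝ) by positivity)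
    linarith [h2, h3]
  have hbu : (b : ℝ) * u ≤ 2 * L := by
    have h := mul_le_mul_of_nonneg_left hlogt_lb (show (0 : ℝ) ≤ 2 * (b : ℝ) from mul_nonneg zero_le_two (Nat.cast_nonneg b))
    linarith [hBR, h]
  have haux : (a : ℝ) * u ≤ 2 * n * L / Real.log 2 := by
    rw [le_div_iff₀ hlog2]
    linarith [hau]
  have hω : (omegaIdeal I : ℝ) = (a : ℝ) + b := by
    rw [← hab]; push_cast; ring
  clear_value n N L u t T a b
  rw [hω]
  have key : ((a : ℝ) + b) * u * Real.log 2 < (4 * n + 3 * Real.log 2) * L := by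
    have h4 := mul_le_mul_of_nonneg_right hbu hlog2.le
    have hn0 : (0 : ℝ) ≤ (n : ℝ) := Nat.cast_nonneg n
    linarith only [hau, h4, mul_nonneg hn0 hL0.le, mul_pos hlog2 hL0]
  rw [show (4 * (n : ℝ) / Real.log 2 + 3) * L / u
      = ((4 * n + 3 * Real.log 2) * L) / (Real.log 2 * u) by field_simp,
    lt_div_iff₀ (by positivity)]
  linarith only [key]

end Helpers

theorem stmt_15 (K : Type*) [Field K] [NumberField K] :
    ∃ k : ℝ, 0 < k ∧
      {I : Ideal (𝓞 K) | I ≠ ⊥ ∧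
        ¬ ((omegaIdeal I : ℝ) <
            k * Real.log (Ideal.absNorm I) / Real.log (Real.log (Ideal.absNorm I)))}.Finite
      := by
  refine ⟨4 * (Module.finrank ℤ (𝓞 K)) / Real.log 2 + 3, ?_, ?_⟩
  · have h0 : (0 : ℝ) ≤ 4 * (Module.finrank ℤ (𝓞 K)) / Real.log 2 :=
      div_nonneg (by positivity) (Real.log_nonneg one_le_two)
    linarith
  · apply (Ideal.finite_setOf_absNorm_le (S := 𝓞 K) ⌈Real.exp (Real.exp 100)⌉₊).subset
    rintro I ⟨hIbot, hIneg⟩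
    simp only [Set.mem_setOf_eq]
    by_contra hgt
    push_neg at hgt
    apply hIneg
    apply main_bound hIbot
    have h1 : (⌈Real.exp (Real.exp 100)⌉₊ : ℝ) ≤ (Ideal.absNorm I : ℝ) := by
      exact_mod_cast le_of_lt hgt
    exact (Nat.le_ceil _).trans h1
end
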